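/- Let H be a connected rooted graph on h ≥ 1 vertices with root o, G a finite simple graph, Δ ≥ 0, and α = (α_w)_{w ∈ V(H)} a vector of non-negative reals. Then the weighted homomorphism count hom_{Δ,α}(H,G) := Σ_{φ ∈ Hom(H,G)} 1[d_{φ(o)} ≥ Δ] · Π_{w ∈ V(H)} d_{φ(w)}^{α_w} satisfies hom_{Δ,α}(H,G) ≤ Σ_{v ∈ V(G)} d_v^{h-1+|α|} · 1[d_v ≥ Δ], where |α| := Σ_{w ∈ V(H)} α_w. -/

import Mathlib

open Finset SimpleGraph
open scoped Classical

set_option linter.unusedSectionVars false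
namespace WTS

open Matrix

variable {VH VG : Type*} [Fintype VH] [Fintype VG]

/-- Summing the value of `F` over all functions, with one coordinate freshly resampled,
equals `card VG` times the plain sum. -/
lemma n_mul_sum (u : VH) (F : (VH → VG) → ℝ) :
    (Fintype.card VG : ℝ) * ∑ f : VH → VG, F f
      = ∑ g : VH → VG, ∑ x : VG, F (Function.update g u x) := by
  classical
  let e : ((VH → VG) × VG) ≃ ((VH → VG) × VG) :=
    { toFun := fun p => (Function.update p.1 u p.2, p.1 u)
      invFun := fun p => (Function.update p.1 u p.2, p.1 u)
      left_inv := by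
        rintro ⟨g, x⟩
        simp [Function.update_idem, Function.update_eq_self]
      right_inv := by
        rintro ⟨g, x⟩
        simp [Function.update_idem, Function.update_eq_self] }
  have h1 : ∑ g : VH → VG, ∑ x : VG, F (Function.update g u x)
      = ∑ p : (VH → VG) × VG, F (Function.update p.1 u p.2) :=
    (Fintype.sum_prod_type (fun p : (VH → VG) × VG => F (Function.update p.1 u p.2))).symm
  have h2 : ∑ p : (VH → VG) × VG, F (Function.update p.1 u p.2)
      = ∑ p : (VH → VG) × VG, F p.1 := by
    exact Equiv.sum_comp e (fun q : (VH → VG) × VG => F q.1)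
  rw [h1, h2, Fintype.sum_prod_type]
  simp only [Finset.sum_const, Finset.card_univ, nsmul_eq_mul]
  rw [Finset.mul_sum]


/-- Sum of a function of one coordinate over all functions. -/
lemma sum_eval (hn : 0 < Fintype.card VG) (hVH : 0 < Fintype.card VH)
    (o : VH) (φ : VG → ℝ) :
    ∑ f : VH → VG, φ (f o)
      = (Fintype.card VG : ℝ) ^ (Fintype.card VH - 1) * ∑ v : VG, φ v := by
  classical
  have hm := n_mul_sum o (fun f : VH → VG => φ (f o))
  have hus : ∀ (g : VH → VG) (x : VG), Function.update g o x o = x := by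
    intro g x; simp
  simp only [hus] at hm
  have hcard : ∑ g : VH → VG, ∑ x : VG, φ x
      = (Fintype.card VG : ℝ) ^ (Fintype.card VH) * ∑ v : VG, φ v := by
    rw [Finset.sum_const, Finset.card_univ, Fintype.card_fun, nsmul_eq_mul]
    push_cast
    ring
  rw [hcard] at hm
  have hpow : (Fintype.card VG : ℝ) ^ (Fintype.card VH)
      = (Fintype.card VG : ℝ) * (Fintype.card VG : ℝ) ^ (Fintype.card VH - 1) := by
    rw [← pow_succ']
    congr 1
    omega
  rw [hpow] at hm
  have hne : (Fintype.card VG : ℝ) ≠ 0 := by positivity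
  apply mul_left_cancel₀ hne
  rw [hm]; ring


/-- Summing out a "leaf" coordinate `u`, constrained only to be adjacent to `f p`. -/
lemma key (G : SimpleGraph VG) (u p : VH) (hpu : p ≠ u)
    (A : (VH → VG) → ℝ) (hA : ∀ g x, A (Function.update g u x) = A g)
    (φ : VG → ℝ) :
    (Fintype.card VG : ℝ) *
      ∑ f : VH → VG, (if G.Adj (f p) (f u) then φ (f u) else 0) * A f
    = ∑ f : VH → VG, (∑ x ∈ G.neighborFinset (f p), φ x) * A f := by
  classical
  have h1 := n_mul_sum u
    (fun f : VH → VG => (if G.Adj (f p) (f u) then φ (f u) else 0) * A f)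
  rw [h1]
  apply Finset.sum_congr rfl
  intro g _
  have hp : ∀ x : VG, Function.update g u x p = g p := by
    intro x; exact Function.update_of_ne hpu _ _
  have hu : ∀ x : VG, Function.update g u x u = x := by
    intro x; simp
  simp only [hp, hu, hA]
  rw [← Finset.sum_mul]
  congr 1
  rw [neighborFinset_eq_filter, Finset.sum_filter]


section Rmat

variable (G : SimpleGraph VG)

lemma adjpow_nonneg (k : ℕ) (i j : VG) : 0 ≤ (G.adjMatrix ℝ ^ k) i j := by
  induction k generalizing i j with
  | zero =>
    simp only [pow_zero, Matrix.one_apply]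
    split <;> norm_num
  | succ k ih =>
    rw [pow_succ, Matrix.mul_apply]
    apply Finset.sum_nonneg
    intro x _
    apply mul_nonneg (ih i x)
    simp only [SimpleGraph.adjMatrix_apply]
    split <;> norm_num

lemma adjpow_symm (k : ℕ) (i j : VG) :
    (G.adjMatrix ℝ ^ k) i j = (G.adjMatrix ℝ ^ k) j i := by
  have h : (G.adjMatrix ℝ ^ k)ᵀ = G.adjMatrix ℝ ^ k := by
    rw [Matrix.transpose_pow, SimpleGraph.transpose_adjMatrix]
  conv_lhs => rw [← h]
  rfl

/-- Monotone-weight walk bound: `τᵀ A^k ρ ≤ ∑_v τ(v) ρ(v) d_v^k` whenever `τ, ρ` are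
nonnegative nondecreasing functions of the degree. -/
lemma Rmat (k : ℕ) (F P : ℕ → ℝ) (hF : Monotone F) (hP : Monotone P)
    (hF0 : ∀ m, 0 ≤ F m) (hP0 : ∀ m, 0 ≤ P m) :
    ∑ v : VG, F (G.degree v) * ((G.adjMatrix ℝ ^ k) *ᵥ fun u => P (G.degree u)) v
      ≤ ∑ v : VG, F (G.degree v) * P (G.degree v) * (G.degree v : ℝ) ^ k := by
  induction k generalizing F P with
  | zero =>
    simp [Matrix.one_mulVec]
  | succ k ih =>
    classical
    set M : Matrix VG VG ℝ := G.adjMatrix ℝ ^ (k + 1) with hM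
    have hunf : ∑ v : VG, F (G.degree v) * (M *ᵥ fun u => P (G.degree u)) v
        = ∑ v : VG, ∑ u : VG, M v u * (F (G.degree v) * P (G.degree u)) := by
      apply Finset.sum_congr rfl
      intro v _
      rw [Matrix.mulVec, dotProduct, Finset.mul_sum]
      apply Finset.sum_congr rfl
      intro u _
      ring
    have hsym : ∀ i j : VG, M i j = M j i := by
      intro i j; rw [hM]; exact adjpow_symm G (k + 1) i j
    have hnn : ∀ i j : VG, 0 ≤ M i j := by
      intro i j; rw [hM]; exact adjpow_nonneg G (k + 1) i j
    have swapid : ∀ (a b : VG → ℝ), ∑ v : VG, ∑ u : VG, M v u * (a v * b u)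
        = ∑ v : VG, ∑ u : VG, M v u * (a u * b v) := by
      intro a b
      rw [Finset.sum_comm]
      apply Finset.sum_congr rfl
      intro v _
      apply Finset.sum_congr rfl
      intro u _
      rw [hsym]
    have cheb : ∑ v : VG, ∑ u : VG, M v u * (F (G.degree v) * P (G.degree u))
        ≤ ∑ v : VG, ∑ u : VG, M v u * (F (G.degree v) * P (G.degree v)) := by
      have e1 := swapid (fun v => F (G.degree v)) (fun u => P (G.degree u))
      have main : (∑ v : VG, ∑ u : VG, M v u * (F (G.degree v) * P (G.degree u)))
            + ∑ v : VG, ∑ u : VG, M v u * (F (G.degree u) * P (G.degree v))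
          ≤ (∑ v : VG, ∑ u : VG, M v u * (F (G.degree v) * P (G.degree v)))
            + ∑ v : VG, ∑ u : VG, M v u * (F (G.degree u) * P (G.degree u)) := by
        rw [← Finset.sum_add_distrib, ← Finset.sum_add_distrib]
        apply Finset.sum_le_sum
        intro v _
        rw [← Finset.sum_add_distrib, ← Finset.sum_add_distrib]
        apply Finset.sum_le_sum
        intro u _
        have hm := hnn v u
        rcases le_total (G.degree v) (G.degree u) with hle | hle
        · have h1 := hF hle
          have h2 := hP hle
          nlinarith [mul_nonneg hm (mul_nonneg (sub_nonneg.mpr h1) (sub_nonneg.mpr h2))]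
        · have h1 := hF hle
          have h2 := hP hle
          nlinarith [mul_nonneg hm (mul_nonneg (sub_nonneg.mpr h1) (sub_nonneg.mpr h2))]
      have e2' : ∑ v : VG, ∑ u : VG, M v u * (F (G.degree v) * P (G.degree v))
          = ∑ v : VG, ∑ u : VG, M v u * (F (G.degree u) * P (G.degree u)) := by
        rw [Finset.sum_comm]
        apply Finset.sum_congr rfl
        intro v _
        apply Finset.sum_congr rfl
        intro u _
        rw [hsym]
      linarith [e1, main, e2']
    have deg1 : (G.adjMatrix ℝ *ᵥ fun _ : VG => (1 : ℝ)) = fun v => (G.degree v : ℝ) := by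
      funext v
      rw [SimpleGraph.adjMatrix_mulVec_apply]
      rw [Finset.sum_const, nsmul_eq_mul, mul_one]
      rfl
    have collapse : ∑ v : VG, ∑ u : VG, M v u * (F (G.degree v) * P (G.degree v))
        = ∑ v : VG, (F (G.degree v) * P (G.degree v))
            * ((G.adjMatrix ℝ ^ k) *ᵥ fun u => ((G.degree u : ℕ) : ℝ)) v := by
      apply Finset.sum_congr rfl
      intro v _
      have : ∑ u : VG, M v u * (F (G.degree v) * P (G.degree v))
          = (F (G.degree v) * P (G.degree v)) * ∑ u : VG, M v u := by
        rw [Finset.mul_sum]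
        apply Finset.sum_congr rfl
        intro u _
        ring
      rw [this]
      congr 1
      have : ∑ u : VG, M v u = (M *ᵥ fun _ : VG => (1 : ℝ)) v := by
        rw [Matrix.mulVec, dotProduct]
        simp
      rw [this, hM, pow_succ, ← Matrix.mulVec_mulVec, deg1]
    have ihx := ih (fun m => F m * P m) (fun m => (m : ℝ))
      (fun a b hab => mul_le_mul (hF hab) (hP hab) (hP0 _) (hF0 _))
      (fun a b hab => by simpa using (Nat.cast_le (α := ℝ)).mpr hab)
      (fun m => mul_nonneg (hF0 _) (hP0 _))
      (fun m => by positivity)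
    calc ∑ v : VG, F (G.degree v) * (M *ᵥ fun u => P (G.degree u)) v
        = ∑ v : VG, ∑ u : VG, M v u * (F (G.degree v) * P (G.degree u)) := hunf
      _ ≤ ∑ v : VG, ∑ u : VG, M v u * (F (G.degree v) * P (G.degree v)) := cheb
      _ = ∑ v : VG, (F (G.degree v) * P (G.degree v))
            * ((G.adjMatrix ℝ ^ k) *ᵥ fun u => ((G.degree u : ℕ) : ℝ)) v := collapse
      _ ≤ ∑ v : VG, (F (G.degree v) * P (G.degree v)) * (G.degree v : ℝ)
            * (G.degree v : ℝ) ^ k := by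
          exact ihx
      _ = ∑ v : VG, F (G.degree v) * P (G.degree v) * (G.degree v : ℝ) ^ (k + 1) := by
          apply Finset.sum_congr rfl
          intro v _
          rw [pow_succ]
          ring

end Rmat


section Chain

variable {S : Finset VH} (π : VH → VH) (o : VH)

noncomputable def chainList : ℕ → VH → List VH
  | 0, x => [x]
  | (k+1), x => if x = o then [x] else x :: chainList k (π x)

lemma cl_cons (k : ℕ) (x : VH) : ∃ t, chainList π o k x = x :: t := by
  cases k with
  | zero => exact ⟨[], rfl⟩
  | succ k =>
    by_cases hx : x = o
    · exact ⟨[], by simp [chainList, hx]⟩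
    · exact ⟨chainList π o k (π x), by simp [chainList, hx]⟩

lemma cl_ne_nil (k : ℕ) (x : VH) : chainList π o k x ≠ [] := by
  obtain ⟨t, ht⟩ := cl_cons π o k x
  simp [ht]

variable (r : VH → ℕ)
variable (hπS : ∀ v ∈ S, v ≠ o → π v ∈ S) (hr : ∀ v ∈ S, v ≠ o → r (π v) < r v)

include hπS hr

lemma cl_mem (k : ℕ) (x : VH) (hx : x ∈ S) : ∀ y ∈ chainList π o k x, y ∈ S := by
  induction k generalizing x with
  | zero => intro y hy; simp [chainList] at hy; subst hy; exact hx
  | succ k ih =>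
    intro y hy
    by_cases hxo : x = o
    · simp [chainList, hxo] at hy; subst hy; simpa [hxo] using hx
    · simp only [chainList, if_neg hxo, List.mem_cons] at hy
      rcases hy with rfl | hy
      · exact hx
      · exact ih (π x) (hπS x hx hxo) y hy

lemma cl_rank_le (k : ℕ) (x : VH) (hx : x ∈ S) :
    ∀ y ∈ chainList π o k x, r y ≤ r x := by
  induction k generalizing x with
  | zero => intro y hy; simp [chainList] at hy; rw [hy]
  | succ k ih =>
    intro y hy
    by_cases hxo : x = o
    · simp [chainList, hxo] at hy; rw [hy, hxo]
    · simp only [chainList, if_neg hxo, List.mem_cons] at hy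
      rcases hy with rfl | hy
      · exact Nat.le_refl _
      · exact le_trans (ih (π x) (hπS x hx hxo) y hy) (le_of_lt (hr x hx hxo))

lemma cl_pairwise (k : ℕ) (x : VH) (hx : x ∈ S) :
    List.Pairwise (fun a b => r b < r a) (chainList π o k x) := by
  induction k generalizing x with
  | zero => simp [chainList]
  | succ k ih =>
    by_cases hxo : x = o
    · simp [chainList, hxo]
    · simp only [chainList, if_neg hxo]
      refine List.Pairwise.cons ?_ (ih (π x) (hπS x hx hxo))
      intro y hy
      exact lt_of_le_of_lt (cl_rank_le π o r hπS hr k (π x) (hπS x hx hxo) y hy)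
        (hr x hx hxo)

lemma cl_nodup (k : ℕ) (x : VH) (hx : x ∈ S) : (chainList π o k x).Nodup := by
  refine (cl_pairwise π o r hπS hr k x hx).imp ?_
  intro a b hab
  intro hEq
  subst hEq
  exact lt_irrefl _ hab

lemma cl_getLast (k : ℕ) (x : VH) (hx : x ∈ S) (hk : r x ≤ k) :
    (chainList π o k x).getLast (cl_ne_nil π o k x) = o := by
  induction k generalizing x with
  | zero =>
    by_cases hxo : x = o
    · simp [chainList, hxo]
    · exact absurd (lt_of_lt_of_le (hr x hx hxo) hk) (Nat.not_lt_zero _)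
  | succ k ih =>
    by_cases hxo : x = o
    · simp [chainList, hxo]
    · have h1 : chainList π o (k+1) x = x :: chainList π o k (π x) := by
        simp [chainList, hxo]
      rw [List.getLast_congr _ (List.cons_ne_nil _ _) h1, List.getLast_cons (cl_ne_nil π o k (π x))]
      have := hr x hx hxo
      exact ih (π x) (hπS x hx hxo) (by omega)

lemma cl_chain (k : ℕ) (x : VH) (hx : x ∈ S) :
    List.Chain' (fun a b => π a = b) (chainList π o k x) := by
  induction k generalizing x with
  | zero => simp [chainList, List.Chain']
  | succ k ih =>
    by_cases hxo : x = o
    · simp [chainList, hxo, List.Chain']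
    · simp only [chainList, if_neg hxo]
      obtain ⟨t, ht⟩ := cl_cons π o k (π x)
      rw [ht]
      refine List.isChain_cons_cons.mpr ⟨rfl, ?_⟩
      rw [← ht]
      exact ih (π x) (hπS x hx hxo)

lemma cl_closure (k : ℕ) (x : VH) (hx : x ∈ S) (hk : r x ≤ k) :
    ∀ y ∈ chainList π o k x, y ≠ o → π y ∈ chainList π o k x := by
  induction k generalizing x with
  | zero =>
    by_cases hxo : x = o
    · intro y hy hyo; simp [chainList, hxo] at hy; exact absurd hy hyo
    · exact absurd (lt_of_lt_of_le (hr x hx hxo) hk) (Nat.not_lt_zero _)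
  | succ k ih =>
    intro y hy hyo
    by_cases hxo : x = o
    · simp [chainList, hxo] at hy; exact absurd hy hyo
    · simp only [chainList, if_neg hxo, List.mem_cons] at hy ⊢
      have hπx : r (π x) ≤ k := by
        have := hr x hx hxo; omega
      rcases hy with rfl | hy
      · right
        obtain ⟨t, ht⟩ := cl_cons π o k (π y)
        rw [ht]; exact List.mem_cons_self
      · right
        exact ih (π x) (hπS x hx hxo) hπx y hy hyo

end Chain


section Main

variable (G : SimpleGraph VG) (Δ : ℕ)

noncomputable def mu (v : VG) : ℝ := if Δ ≤ G.degree v then 1 else 0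

lemma mu_nonneg (v : VG) : 0 ≤ mu G Δ v := by
  unfold mu; split <;> norm_num

/-- The tree-constrained weighted sum over all maps `VH → VG`. -/
noncomputable def TS (π : VH → VH) (o : VH) (S : Finset VH) (w : VH) (ρ : VG → ℝ) : ℝ :=
  ∑ f : VH → VG,
    (∏ v ∈ S.erase o, if G.Adj (f (π v)) (f v) then (1:ℝ) else 0)
      * (mu G Δ (f o) * ρ (f w))

lemma next_mem_tail (π : VH → VH) :
    ∀ (L : List VH) (hne : L ≠ []) (_ : List.Chain' (fun a b => π a = b) L)
      (v : VH) (_ : v ∈ L) (_ : v ≠ L.getLast hne), π v ∈ L.tail := by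
  intro L
  induction L with
  | nil => intro hne; exact absurd rfl hne
  | cons a rest ih =>
    intro hne hch v hv hvlast
    cases rest with
    | nil =>
      simp at hv
      exact absurd (by simp [hv]) hvlast
    | cons b t =>
      rcases List.mem_cons.mp hv with rfl | hv'
      · have hab : π v = b := (List.isChain_cons_cons.mp hch).1
        simp [hab]
      · have hch' : List.Chain' (fun a b => π a = b) (b :: t) := (List.isChain_cons_cons.mp hch).2
        have hvl : v ≠ (b :: t).getLast (by simp) := by
          intro hEq
          apply hvlast
          rw [hEq]
          exact (List.getLast_cons (by simp)).symm
        have htl := ih (by simp) hch' v hv' hvl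
        simp only [List.tail_cons] at htl ⊢
        exact List.mem_cons_of_mem _ htl

lemma path_lemma (hn : 0 < Fintype.card VG) (hVH : 0 < Fintype.card VH)
    (π : VH → VH) (o : VH) :
    ∀ (L : List VH) (hne : L ≠ []), L.Nodup →
      L.getLast hne = o →
      List.Chain' (fun a b => π a = b) L →
      ∀ ρ : VG → ℝ,
    TS G Δ π o L.toFinset (L.head hne) ρ
      = (Fintype.card VG : ℝ) ^ (Fintype.card VH - L.length)
        * ∑ v : VG, mu G Δ v * ((G.adjMatrix ℝ ^ (L.length - 1)) *ᵥ ρ) v := by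
  intro L
  induction L with
  | nil => intro hne; exact absurd rfl hne
  | cons z₀ L' ih =>
    intro hne hnd hlast hch ρ
    cases L' with
    | nil =>
      have hz : z₀ = o := hlast
      subst hz
      unfold TS
      have he : ((([z₀] : List VH).toFinset).erase z₀) = (∅ : Finset VH) := by simp
      rw [he]
      simp only [Finset.prod_empty, one_mul, List.head_cons]
      rw [sum_eval hn hVH z₀ (fun v => mu G Δ v * ρ v)]
      simp [Matrix.one_mulVec]
    | cons z₁ L'' =>
      have hneL' : (z₁ :: L'') ≠ [] := by simp
      have hndL' : (z₁ :: L'').Nodup := (List.nodup_cons.mp hnd).2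
      have hz₀L' : z₀ ∉ (z₁ :: L'') := (List.nodup_cons.mp hnd).1
      have hlastL' : (z₁ :: L'').getLast hneL' = o := by
        rw [← hlast]
        exact (List.getLast_cons hneL').symm
      have hchL' : List.Chain' (fun a b => π a = b) (z₁ :: L'') :=
        (List.isChain_cons_cons.mp hch).2
      have hπz₀ : π z₀ = z₁ := (List.isChain_cons_cons.mp hch).1
      have hz₀o : z₀ ≠ o := by
        intro hEq
        apply hz₀L'
        rw [hEq, ← hlastL']
        exact List.getLast_mem hneL'
      have hz₁z₀ : z₁ ≠ z₀ := by
        intro hEq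
        exact hz₀L' (by rw [← hEq]; exact List.mem_cons_self)
      have hSS' : ((z₀ :: z₁ :: L'').toFinset : Finset VH)
          = insert z₀ ((z₁ :: L'').toFinset) := by simp
      have hz₀S' : z₀ ∉ ((z₁ :: L'').toFinset : Finset VH) := by
        simpa using hz₀L'
      have herase : ((z₀ :: z₁ :: L'').toFinset : Finset VH).erase o
          = insert z₀ (((z₁ :: L'').toFinset).erase o) := by
        rw [hSS', Finset.erase_insert_of_ne hz₀o]
      have hz₀eS' : z₀ ∉ (((z₁ :: L'').toFinset : Finset VH)).erase o := by
        intro hmem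
        exact hz₀S' (Finset.mem_of_mem_erase hmem)
      have hnonpar : ∀ v ∈ (((z₁ :: L'').toFinset : Finset VH)).erase o, π v ≠ z₀ := by
        intro v hv
        have hvS : v ∈ (z₀ :: z₁ :: L'') := by
          have := Finset.mem_of_mem_erase hv
          rw [List.mem_toFinset] at this
          exact List.mem_cons_of_mem _ this
        have hvo : v ≠ o := (Finset.mem_erase.mp hv).1
        have hvlast : v ≠ (z₀ :: z₁ :: L'').getLast hne := by rw [hlast]; exact hvo
        have htail := next_mem_tail π (z₀ :: z₁ :: L'') hne hch v hvS hvlast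
        simp only [List.tail_cons] at htail
        intro hEq
        rw [hEq] at htail
        exact hz₀L' htail
      -- the integrand without the z₀-factor
      set A : (VH → VG) → ℝ := fun f =>
        (∏ v ∈ (((z₁ :: L'').toFinset : Finset VH)).erase o,
          if G.Adj (f (π v)) (f v) then (1:ℝ) else 0) * mu G Δ (f o) with hA_def
      have hA : ∀ (g : VH → VG) (x : VG), A (Function.update g z₀ x) = A g := by
        intro g x
        rw [hA_def]
        simp only
        congr 1
        · apply Finset.prod_congr rfl
          intro v hv
          have h1 : v ≠ z₀ := fun hEq => hz₀eS' (hEq ▸ hv)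
          have h2 : π v ≠ z₀ := hnonpar v hv
          rw [Function.update_of_ne h1, Function.update_of_ne h2]
        · rw [Function.update_of_ne (Ne.symm hz₀o)]
      have step1 : TS G Δ π o ((z₀ :: z₁ :: L'').toFinset) z₀ ρ
          = ∑ f : VH → VG, (if G.Adj (f z₁) (f z₀) then ρ (f z₀) else 0) * A f := by
        unfold TS
        apply Finset.sum_congr rfl
        intro f _
        rw [herase, Finset.prod_insert hz₀eS', hπz₀, hA_def]
        by_cases hadj : G.Adj (f z₁) (f z₀)
        · simp only [if_pos hadj]; ring
        · simp only [if_neg hadj]; ring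
      have step2 := key G z₀ z₁ hz₁z₀ A hA ρ
      have step3 : ∑ f : VH → VG, (∑ x ∈ G.neighborFinset (f z₁), ρ x) * A f
          = TS G Δ π o ((z₁ :: L'').toFinset) z₁ (G.adjMatrix ℝ *ᵥ ρ) := by
        unfold TS
        apply Finset.sum_congr rfl
        intro f _
        rw [hA_def]
        simp only
        rw [SimpleGraph.adjMatrix_mulVec_apply]
        ring
      have hih := ih hneL' hndL' hlastL' hchL' (G.adjMatrix ℝ *ᵥ ρ)
      have hhead : (z₁ :: L'').head hneL' = z₁ := rfl
      rw [hhead] at hih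
      set m : ℕ := (z₁ :: L'').length with hm_def
      have hm1 : 1 ≤ m := by simp [hm_def]
      have hvec : (G.adjMatrix ℝ ^ (m - 1)) *ᵥ (G.adjMatrix ℝ *ᵥ ρ)
          = (G.adjMatrix ℝ ^ m) *ᵥ ρ := by
        rw [Matrix.mulVec_mulVec, ← pow_succ, Nat.sub_add_cancel hm1]
      have hlen : m + 1 ≤ Fintype.card VH := by
        have := List.Nodup.length_le_card hnd
        simpa [hm_def] using this
      have hexp : ((Fintype.card VG : ℝ)) ^ (Fintype.card VH - m)
          = (Fintype.card VG : ℝ) * (Fintype.card VG : ℝ) ^ (Fintype.card VH - (m + 1)) := by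
        rw [← pow_succ']
        congr 1
        omega
      have hne0 : (Fintype.card VG : ℝ) ≠ 0 := by positivity
      have hcomb : (Fintype.card VG : ℝ) * TS G Δ π o ((z₀ :: z₁ :: L'').toFinset) z₀ ρ
          = (Fintype.card VG : ℝ) *
            ((Fintype.card VG : ℝ) ^ (Fintype.card VH - (m + 1))
              * ∑ v : VG, mu G Δ v * ((G.adjMatrix ℝ ^ m) *ᵥ ρ) v) := by
        rw [step1, step2, step3, hih, hvec, hexp]
        ring
      have hfinal := mul_left_cancel₀ hne0 hcomb
      have hhead2 : (z₀ :: z₁ :: L'').head hne = z₀ := rfl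
      rw [hhead2]
      have hlen2 : (z₀ :: z₁ :: L'').length = m + 1 := by simp [hm_def]
      rw [hlen2]
      simpa using hfinal


lemma young2 (s a b : ℝ) (hs : 0 ≤ s) (ha : 0 ≤ a) (hb : 0 ≤ b) :
    b ^ s * a ≤ (1 / (s + 1)) * a ^ (s + 1) + (s / (s + 1)) * b ^ (s + 1) := by
  have hs1 : (0:ℝ) < s + 1 := by linarith
  have h1 : (a ^ (s+1)) ^ (1/(s+1)) = a := by
    rw [← Real.rpow_mul ha]
    rw [mul_one_div, div_self (ne_of_gt hs1), Real.rpow_one]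
  have h2 : (b ^ (s+1)) ^ (s/(s+1)) = b ^ s := by
    rw [← Real.rpow_mul hb]
    congr 1
    field_simp
  have := Real.geom_mean_le_arith_mean2_weighted
    (w₁ := 1/(s+1)) (w₂ := s/(s+1)) (p₁ := a ^ (s+1)) (p₂ := b ^ (s+1))
    (by positivity) (by positivity) (by positivity) (by positivity)
    (by field_simp; ring)
  rw [h1, h2] at this
  calc b ^ s * a = a * b ^ s := by ring
    _ ≤ _ := this

lemma atom_main (hn : 0 < Fintype.card VG) (hVH : 0 < Fintype.card VH)
    (π : VH → VH) (r : VH → ℕ) (o : VH)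
    (hπ : ∀ v : VH, v ≠ o → r (π v) < r v) :
    ∀ (N : ℕ) (S : Finset VH) (w : VH) (s : ℝ), S.card ≤ N →
      o ∈ S → w ∈ S → (∀ v ∈ S, v ≠ o → π v ∈ S) → 0 ≤ s →
      TS G Δ π o S w (fun x => (G.degree x : ℝ) ^ s)
        ≤ (Fintype.card VG : ℝ) ^ (Fintype.card VH - S.card)
          * ∑ v : VG, mu G Δ v * (G.degree v : ℝ) ^ ((S.card : ℝ) - 1 + s) := by
  intro N
  induction N with
  | zero =>
    intro S w s hcard ho _ _ _
    exact absurd (Finset.card_pos.mpr ⟨o, ho⟩) (by omega)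
  | succ N ihN =>
    intro S w s hcard ho hw hπS hs
    have hcard1 : 1 ≤ S.card := Finset.card_pos.mpr ⟨o, ho⟩
    by_cases hone : S.card = 1
    · -- base : S = {o}
      obtain ⟨a, ha⟩ := Finset.card_eq_one.mp hone
      have hao : a = o := by
        have h := ho; rw [ha] at h
        exact (Finset.mem_singleton.mp h).symm
      have ha' : S = {o} := by rw [ha, hao]
      have hwo : w = o := by
        have h := hw; rw [ha'] at h; exact Finset.mem_singleton.mp h
      rw [ha', hwo]
      unfold TS
      have herase : ({o} : Finset VH).erase o = ∅ := by simp
      rw [herase]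
      simp only [Finset.prod_empty, one_mul, Finset.card_singleton]
      rw [sum_eval hn hVH o (fun v => mu G Δ v * (G.degree v : ℝ) ^ s)]
      apply le_of_eq
      congr 1
      apply Finset.sum_congr rfl
      intro v _
      norm_num
    · -- S.card ≥ 2
      have hcard2 : 2 ≤ S.card := by omega
      by_cases hpeel : ∃ u ∈ S, u ≠ o ∧ u ≠ w ∧ ∀ v ∈ S.erase o, π v ≠ u
      · obtain ⟨u, huS, huo, huw, hupar⟩ := hpeel
        have hπu_ne : π u ≠ u := fun hEq => absurd (hEq ▸ hπ u huo) (lt_irrefl _)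
        have huSo : u ∈ S.erase o := Finset.mem_erase.mpr ⟨huo, huS⟩
        set S' : Finset VH := S.erase u with hS'def
        have hS'erase : S'.erase o = (S.erase o).erase u := Finset.erase_right_comm
        have hπuS' : π u ∈ S' := Finset.mem_erase.mpr ⟨hπu_ne, hπS u huS huo⟩
        have hwS' : w ∈ S' := Finset.mem_erase.mpr ⟨Ne.symm huw, hw⟩
        have hoS' : o ∈ S' := Finset.mem_erase.mpr ⟨Ne.symm huo, ho⟩
        have hπS' : ∀ v ∈ S', v ≠ o → π v ∈ S' := by
          intro v hv hvo
          have hvS : v ∈ S := Finset.mem_of_mem_erase hv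
          refine Finset.mem_erase.mpr ⟨?_, hπS v hvS hvo⟩
          exact hupar v (Finset.mem_erase.mpr ⟨hvo, hvS⟩)
        have hcardS' : S'.card = S.card - 1 := Finset.card_erase_of_mem huS
        set A : (VH → VG) → ℝ := fun f =>
          (∏ v ∈ (S.erase o).erase u, if G.Adj (f (π v)) (f v) then (1:ℝ) else 0)
            * (mu G Δ (f o) * (G.degree (f w) : ℝ) ^ s) with hA_def
        have hA : ∀ (g : VH → VG) (x : VG), A (Function.update g u x) = A g := by
          intro g x
          rw [hA_def]
          simp only
          congr 1
          · apply Finset.prod_congr rfl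
            intro v hv
            have h1 : v ≠ u := (Finset.mem_erase.mp hv).1
            have h2 : π v ≠ u := hupar v (Finset.mem_of_mem_erase hv)
            rw [Function.update_of_ne h1, Function.update_of_ne h2]
          · rw [Function.update_of_ne (Ne.symm huo), Function.update_of_ne (Ne.symm huw)]
        have step1 : TS G Δ π o S w (fun x => (G.degree x : ℝ) ^ s)
            = ∑ f : VH → VG,
                (if G.Adj (f (π u)) (f u) then (fun _ : VG => (1:ℝ)) (f u) else 0) * A f := by
          unfold TS
          apply Finset.sum_congr rfl
          intro f _
          rw [← Finset.mul_prod_erase _ _ huSo, hA_def]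
          by_cases hadj : G.Adj (f (π u)) (f u)
          · simp only [if_pos hadj]; ring
          · simp only [if_neg hadj]; ring
        have step2 : (Fintype.card VG : ℝ) * ∑ f : VH → VG,
              (if G.Adj (f (π u)) (f u) then (fun _ : VG => (1:ℝ)) (f u) else 0) * A f
            = ∑ f : VH → VG, (G.degree (f (π u)) : ℝ) * A f := by
          have hk := key G u (π u) hπu_ne A hA (fun _ => (1:ℝ))
          rw [hk]
          apply Finset.sum_congr rfl
          intro f _
          congr 1
          rw [Finset.sum_const, nsmul_eq_mul, mul_one]
          norm_cast
        have step3 : ∑ f : VH → VG, (G.degree (f (π u)) : ℝ) * A f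
            ≤ (1/(s+1)) * TS G Δ π o S' (π u) (fun x => (G.degree x : ℝ) ^ (s+1))
              + (s/(s+1)) * TS G Δ π o S' w (fun x => (G.degree x : ℝ) ^ (s+1)) := by
          unfold TS
          rw [hS'erase, Finset.mul_sum, Finset.mul_sum, ← Finset.sum_add_distrib]
          apply Finset.sum_le_sum
          intro f _
          rw [hA_def]
          simp only
          have hy := young2 s (G.degree (f (π u)) : ℝ) (G.degree (f w) : ℝ)
            hs (Nat.cast_nonneg _) (Nat.cast_nonneg _)
          have hPM : (0:ℝ) ≤ (∏ v ∈ (S.erase o).erase u,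
              if G.Adj (f (π v)) (f v) then (1:ℝ) else 0) * mu G Δ (f o) := by
            apply mul_nonneg _ (mu_nonneg G Δ _)
            apply Finset.prod_nonneg
            intro v _
            split <;> norm_num
          nlinarith [mul_le_mul_of_nonneg_left hy hPM]
        have hcardle : S'.card ≤ N := by omega
        have hih1 := ihN S' (π u) (s+1) hcardle hoS' hπuS' hπS' (by linarith)
        have hih2 := ihN S' w (s+1) hcardle hoS' hwS' hπS' (by linarith)
        have hSh : S.card ≤ Fintype.card VH := Finset.card_le_univ S
        have hcast : ((S'.card : ℕ) : ℝ) - 1 + (s+1) = (S.card : ℝ) - 1 + s := by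
          rw [hcardS']
          have h1 : ((S.card - 1 : ℕ) : ℝ) = (S.card : ℝ) - 1 := by
            push_cast [Nat.cast_sub hcard1]
            ring
          rw [h1]
          ring
        have hpow : ((Fintype.card VG : ℝ)) ^ (Fintype.card VH - S'.card)
            = (Fintype.card VG : ℝ) * (Fintype.card VG : ℝ) ^ (Fintype.card VH - S.card) := by
          rw [hcardS', ← pow_succ']
          congr 1
          omega
        rw [hcast, hpow] at hih1 hih2
        have hs1 : (0:ℝ) < s + 1 := by linarith
        have hfinal : (Fintype.card VG : ℝ) * TS G Δ π o S w (fun x => (G.degree x : ℝ) ^ s)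
            ≤ (Fintype.card VG : ℝ) * ((Fintype.card VG : ℝ) ^ (Fintype.card VH - S.card)
              * ∑ v : VG, mu G Δ v * (G.degree v : ℝ) ^ ((S.card : ℝ) - 1 + s)) := by
          rw [step1, step2]
          calc ∑ f : VH → VG, (G.degree (f (π u)) : ℝ) * A f
              ≤ (1/(s+1)) * TS G Δ π o S' (π u) (fun x => (G.degree x : ℝ) ^ (s+1))
                + (s/(s+1)) * TS G Δ π o S' w (fun x => (G.degree x : ℝ) ^ (s+1)) := step3
            _ ≤ (1/(s+1)) * ((Fintype.card VG : ℝ)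
                  * ((Fintype.card VG : ℝ) ^ (Fintype.card VH - S.card)
                    * ∑ v : VG, mu G Δ v * (G.degree v : ℝ) ^ ((S.card : ℝ) - 1 + s)))
                + (s/(s+1)) * ((Fintype.card VG : ℝ)
                  * ((Fintype.card VG : ℝ) ^ (Fintype.card VH - S.card)
                    * ∑ v : VG, mu G Δ v * (G.degree v : ℝ) ^ ((S.card : ℝ) - 1 + s))) := by
                apply add_le_add
                · apply mul_le_mul_of_nonneg_left _ (by positivity)
                  calc TS G Δ π o S' (π u) (fun x => (G.degree x : ℝ) ^ (s+1)) ≤ _ := hih1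
                    _ = _ := by ring
                · apply mul_le_mul_of_nonneg_left _ (by positivity)
                  calc TS G Δ π o S' w (fun x => (G.degree x : ℝ) ^ (s+1)) ≤ _ := hih2
                    _ = _ := by ring
            _ = (Fintype.card VG : ℝ) * ((Fintype.card VG : ℝ) ^ (Fintype.card VH - S.card)
                  * ∑ v : VG, mu G Δ v * (G.degree v : ℝ) ^ ((S.card : ℝ) - 1 + s)) := by
                field_simp
                ring
        exact le_of_mul_le_mul_left hfinal (by positivity)
      · -- no peelable vertex: S is a path from w to o
        push_neg at hpeel
        have hrS : ∀ v ∈ S, v ≠ o → r (π v) < r v := fun v _ hv => hπ v hv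
        have himg : ∀ (M : ℕ) (u : VH), u ∈ S → u ≠ o → r u ≤ M →
            ∃ z ∈ S.erase o, π z = o := by
          intro M
          induction M with
          | zero =>
            intro u huS huo hru
            exact absurd (lt_of_lt_of_le (hπ u huo) hru) (Nat.not_lt_zero _)
          | succ M ihM =>
            intro u huS huo hru
            by_cases hπuo : π u = o
            · exact ⟨u, Finset.mem_erase.mpr ⟨huo, huS⟩, hπuo⟩
            · refine ihM (π u) (hπS u huS huo) hπuo ?_
              have := hπ u huo
              omega
        obtain ⟨u₀, hu₀S, hu₀o⟩ := Finset.exists_mem_ne (s := S) (by omega) o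
        obtain ⟨z₀, hz₀, hπz₀⟩ := himg (r u₀) u₀ hu₀S hu₀o (le_refl _)
        have how : o ≠ w := by
          intro hEq
          have hsub : S ⊆ (S.erase o).image π := by
            intro x hx
            by_cases hxo : x = o
            · subst hxo; exact Finset.mem_image.mpr ⟨z₀, hz₀, hπz₀⟩
            · obtain ⟨v, hv, hπv⟩ := hpeel x hx hxo (by rw [← hEq]; exact hxo)
              exact Finset.mem_image.mpr ⟨v, hv, hπv⟩
          have h1 := Finset.card_le_card hsub
          have h2 := Finset.card_image_le (s := S.erase o) (f := π)
          rw [Finset.card_erase_of_mem ho] at h2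
          omega
        have hLmem : ∀ y ∈ chainList π o (r w) w, y ∈ S :=
          cl_mem π o r hπS hrS (r w) w hw
        have hLnodup : (chainList π o (r w) w).Nodup :=
          cl_nodup π o r hπS hrS (r w) w hw
        have hLne : chainList π o (r w) w ≠ [] := cl_ne_nil π o (r w) w
        have hLlast : (chainList π o (r w) w).getLast hLne = o :=
          cl_getLast π o r hπS hrS (r w) w hw (le_refl _)
        have hLchain : List.Chain' (fun a b => π a = b) (chainList π o (r w) w) :=
          cl_chain π o r hπS hrS (r w) w hw
        have hLclosure : ∀ y ∈ chainList π o (r w) w, y ≠ o →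
            π y ∈ chainList π o (r w) w :=
          cl_closure π o r hπS hrS (r w) w hw (le_refl _)
        obtain ⟨t₀, ht₀⟩ := cl_cons π o (r w) w
        have hwL : w ∈ chainList π o (r w) w := by
          rw [ht₀]; exact List.mem_cons_self
        have hoL : o ∈ chainList π o (r w) w := by
          have hmem := List.getLast_mem hLne
          rwa [hLlast] at hmem
        have hTS : (chainList π o (r w) w).toFinset ⊆ S :=
          fun y hy => hLmem y (List.mem_toFinset.mp hy)
        have hST : S ⊆ (chainList π o (r w) w).toFinset := by
          by_contra hc
          have hne' : (S \ (chainList π o (r w) w).toFinset).Nonempty := by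
            rw [Finset.sdiff_nonempty]
            exact hc
          obtain ⟨x, hxmem, hxmax⟩ :=
            Finset.exists_max_image (S \ (chainList π o (r w) w).toFinset) r hne'
          have hxS : x ∈ S := (Finset.mem_sdiff.mp hxmem).1
          have hxT : x ∉ (chainList π o (r w) w).toFinset := (Finset.mem_sdiff.mp hxmem).2
          have hxw : x ≠ w := by
            intro hEq
            exact hxT (by rw [hEq]; exact List.mem_toFinset.mpr hwL)
          have hxo : x ≠ o := by
            intro hEq
            exact hxT (by rw [hEq]; exact List.mem_toFinset.mpr hoL)
          obtain ⟨y, hyEr, hπy⟩ := hpeel x hxS hxo hxw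
          have hyS : y ∈ S := Finset.mem_of_mem_erase hyEr
          have hyo : y ≠ o := (Finset.mem_erase.mp hyEr).1
          have hry : r x < r y := by
            have := hπ y hyo
            rw [hπy] at this
            exact this
          have hyT : y ∈ (chainList π o (r w) w).toFinset := by
            by_contra hyT
            have hymem : y ∈ S \ (chainList π o (r w) w).toFinset :=
              Finset.mem_sdiff.mpr ⟨hyS, hyT⟩
            have := hxmax y hymem
            omega
          have hπyL := hLclosure y (List.mem_toFinset.mp hyT) hyo
          rw [hπy] at hπyL
          exact hxT (List.mem_toFinset.mpr hπyL)
        have hSL : S = (chainList π o (r w) w).toFinset := Finset.Subset.antisymm hST hTS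
        have hLlen : (chainList π o (r w) w).length = S.card := by
          rw [hSL]
          exact (List.toFinset_card_of_nodup hLnodup).symm
        have hhead : (chainList π o (r w) w).head hLne = w := by
          have haux : ∀ (l : List VH) (hne : l ≠ []), l = w :: t₀ → l.head hne = w := by
            intro l hne hEq
            subst hEq
            rfl
          exact haux _ hLne ht₀
        have hpath := path_lemma G Δ hn hVH π o (chainList π o (r w) w) hLne hLnodup
          hLlast hLchain (fun x => (G.degree x : ℝ) ^ s)
        rw [hhead, ← hSL, hLlen] at hpath
        rw [hpath]
        apply mul_le_mul_of_nonneg_left _ (by positivity)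
        have hm1 : 1 ≤ S.card - 1 := by omega
        have hRmat := Rmat G (S.card - 1)
          (fun t : ℕ => if Δ ≤ t then (1:ℝ) else 0)
          (fun t : ℕ => (t : ℝ) ^ s)
          (by
            intro a b hab
            simp only
            split_ifs with h1 h2
            · exact le_refl _
            · exact absurd (le_trans h1 hab) h2
            · norm_num
            · exact le_refl _)
          (fun a b hab => Real.rpow_le_rpow (Nat.cast_nonneg _) (by exact_mod_cast hab) hs)
          (fun m => by show 0 ≤ (if Δ ≤ m then (1:ℝ) else 0); split <;> norm_num)
          (fun m => Real.rpow_nonneg (Nat.cast_nonneg _) _)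
        calc ∑ v : VG, mu G Δ v * ((G.adjMatrix ℝ ^ (S.card - 1)) *ᵥ
                fun x => (G.degree x : ℝ) ^ s) v
            ≤ ∑ v : VG, mu G Δ v * (G.degree v : ℝ) ^ s * (G.degree v : ℝ) ^ (S.card - 1) := by
              exact hRmat
          _ ≤ ∑ v : VG, mu G Δ v * (G.degree v : ℝ) ^ ((S.card : ℝ) - 1 + s) := by
              apply Finset.sum_le_sum
              intro v _
              by_cases hdeg : G.degree v = 0
              · rw [hdeg]
                have he1 : ((0:ℕ):ℝ) ^ ((S.card : ℝ) - 1 + s) = 0 := by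
                  rw [Nat.cast_zero, Real.zero_rpow]
                  have : (2:ℝ) ≤ (S.card : ℝ) := by exact_mod_cast hcard2
                  intro hEq
                  nlinarith
                have he2 : ((0:ℕ):ℝ) ^ (S.card - 1) = 0 := by
                  rw [Nat.cast_zero, zero_pow]
                  omega
                rw [he1, he2]
                simp
              · have hpos : (0:ℝ) < (G.degree v : ℝ) :=
                  Nat.cast_pos.mpr (Nat.pos_of_ne_zero hdeg)
                apply le_of_eq
                rw [mul_assoc]
                congr 1
                rw [← Real.rpow_natCast ((G.degree v : ℝ)) (S.card - 1), ← Real.rpow_add hpos]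
                congr 1
                have h1 : ((S.card - 1 : ℕ) : ℝ) = (S.card : ℝ) - 1 := by
                  push_cast [Nat.cast_sub hcard1]
                  ring
                rw [h1]
                ring

end Main

end WTS

open WTS

/-- Weighted truncated Sidorenko inequality: for a connected rooted graph `H` on `h`
vertices, nonnegative weights `α`, and any `Δ ≥ 0`,
`hom_{Δ,α}(H,G) ≤ ∑_v d_v^(h-1+|α|) · 1[d_v ≥ Δ]` (real powers, `0^0 = 1`). -/
theorem weighted_truncated_sidorenko
    {VH VG : Type*} [Fintype VH] [Fintype VG]
    (H : SimpleGraph VH) (G : SimpleGraph VG) (o : VH)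
    (h : ℕ) (hh : 1 ≤ h) (hcard : Fintype.card VH = h)
    (hconn : H.Connected) (Δ : ℕ)
    (α : VH → ℝ) (hα : ∀ w, 0 ≤ α w) :
    ∑ f ∈ Finset.univ.filter
        (fun f : VH → VG =>
          (∀ a b, H.Adj a b → G.Adj (f a) (f b)) ∧ Δ ≤ G.degree (f o)),
      ∏ w : VH, (G.degree (f w) : ℝ) ^ (α w)
      ≤ ∑ v : VG,
          if Δ ≤ G.degree v then
            (G.degree v : ℝ) ^ ((h : ℝ) - 1 + ∑ w : VH, α w)
          else 0 := by
  classical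
  have hVH : 0 < Fintype.card VH := by omega
  -- rewrite RHS via mu
  have hRHS : ∀ (E : ℝ), (∑ v : VG, if Δ ≤ G.degree v then (G.degree v : ℝ) ^ E else 0)
      = ∑ v : VG, mu G Δ v * (G.degree v : ℝ) ^ E := by
    intro E
    apply Finset.sum_congr rfl
    intro v _
    unfold mu
    split <;> simp
  rw [hRHS]
  rcases isEmpty_or_nonempty VG with hVG | hVG
  · -- VG empty: both sides zero
    have hVHne : Nonempty VH := Fintype.card_pos_iff.mp hVH
    have hfe : IsEmpty (VH → VG) := ⟨fun f => IsEmpty.false (f hVHne.some)⟩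
    rw [Finset.univ_eq_empty (α := VH → VG), Finset.univ_eq_empty (α := VG)]
    simp
  · have hn : 0 < Fintype.card VG := Fintype.card_pos
    -- construct parent map π and rank r
    have hex : ∀ v : VH, ∃ p : VH, v ≠ o →
        (H.Adj p v ∧ H.dist o p < H.dist o v) := by
      intro v
      by_cases hv : v = o
      · exact ⟨o, fun hc => absurd hv hc⟩
      · obtain ⟨pwalk, hplen⟩ := hconn.exists_walk_length_eq_dist o v
        have hvo : v ≠ o := hv
        obtain ⟨b, hadj, q, hq⟩ := SimpleGraph.Walk.exists_eq_cons_of_ne hvo pwalk.reverse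
        refine ⟨b, fun _ => ⟨hadj.symm, ?_⟩⟩
        have hlen0 : pwalk.length ≠ 0 := by
          intro h0
          exact hvo (pwalk.eq_of_length_eq_zero h0).symm
        have hql : q.length = pwalk.length - 1 := by
          have hc := congrArg SimpleGraph.Walk.length hq
          rw [SimpleGraph.Walk.length_reverse, SimpleGraph.Walk.length_cons] at hc
          omega
        calc H.dist o b ≤ q.reverse.length := SimpleGraph.dist_le q.reverse
          _ = q.length := SimpleGraph.Walk.length_reverse q
          _ = pwalk.length - 1 := hql
          _ < H.dist o v := by
              rw [hplen] at hlen0 ⊢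
              omega
    choose π hπspec using hex
    set r : VH → ℕ := fun v => H.dist o v with hrdef
    have hπrank : ∀ v : VH, v ≠ o → r (π v) < r v := fun v hv => (hπspec v hv).2
    have hπadj : ∀ v : VH, v ≠ o → H.Adj (π v) v := fun v hv => (hπspec v hv).1
    -- the filtered sum is dominated by the tree sum, for any marked vertex
    set P : (VH → VG) → Prop := fun f =>
      (∀ a b, H.Adj a b → G.Adj (f a) (f b)) ∧ Δ ≤ G.degree (f o) with hPdef
    have hfilter_le : ∀ (w' : VH) (s : ℝ),
        (∑ f ∈ Finset.univ.filter P, (G.degree (f w') : ℝ) ^ s)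
          ≤ TS G Δ π o Finset.univ w' (fun x => (G.degree x : ℝ) ^ s) := by
      intro w' s
      unfold TS
      have hsub : Finset.univ.filter P ⊆ (Finset.univ : Finset (VH → VG)) :=
        Finset.filter_subset _ _
      calc ∑ f ∈ Finset.univ.filter P, (G.degree (f w') : ℝ) ^ s
          = ∑ f ∈ Finset.univ.filter P,
            (∏ v ∈ (Finset.univ : Finset VH).erase o,
              if G.Adj (f (π v)) (f v) then (1:ℝ) else 0)
              * (mu G Δ (f o) * (G.degree (f w') : ℝ) ^ s) := by
            apply Finset.sum_congr rfl
            intro f hf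
            rw [Finset.mem_filter] at hf
            have hprod : (∏ v ∈ (Finset.univ : Finset VH).erase o,
                if G.Adj (f (π v)) (f v) then (1:ℝ) else 0) = 1 := by
              apply Finset.prod_eq_one
              intro v hv
              have hvo : v ≠ o := (Finset.mem_erase.mp hv).1
              rw [if_pos (hf.2.1 _ _ (hπadj v hvo))]
            have hmu : mu G Δ (f o) = 1 := by
              unfold mu
              rw [if_pos hf.2.2]
            rw [hprod, hmu]
            ring
        _ ≤ ∑ f : VH → VG,
            (∏ v ∈ (Finset.univ : Finset VH).erase o,
              if G.Adj (f (π v)) (f v) then (1:ℝ) else 0)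
              * (mu G Δ (f o) * (G.degree (f w') : ℝ) ^ s) := by
            apply Finset.sum_le_sum_of_subset_of_nonneg hsub
            intro f _ _
            apply mul_nonneg
            · apply Finset.prod_nonneg
              intro v _
              split <;> norm_num
            · exact mul_nonneg (mu_nonneg G Δ _)
                (Real.rpow_nonneg (Nat.cast_nonneg _) _)
    -- the atom bound
    have hatom : ∀ (w' : VH) (s : ℝ), 0 ≤ s →
        TS G Δ π o Finset.univ w' (fun x => (G.degree x : ℝ) ^ s)
          ≤ ∑ v : VG, mu G Δ v * (G.degree v : ℝ) ^ ((h : ℝ) - 1 + s) := by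
      intro w' s hs
      have := atom_main G Δ hn hVH π r o hπrank (Fintype.card VH)
        Finset.univ w' s (by rw [Finset.card_univ]) (Finset.mem_univ o)
        (Finset.mem_univ w') (fun v _ hvo => Finset.mem_univ _) hs
      rw [Finset.card_univ, Nat.sub_self, pow_zero, one_mul, hcard] at this
      exact this
    set σ : ℝ := ∑ w : VH, α w with hσdef
    have hσ0 : 0 ≤ σ := Finset.sum_nonneg fun w _ => hα w
    rcases eq_or_lt_of_le hσ0 with hσz | hσpos
    · -- σ = 0 : all weights vanish
      have hall : ∀ w : VH, α w = 0 := by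
        intro w
        have := (Finset.sum_eq_zero_iff_of_nonneg (fun i _ => hα i)).mp hσz.symm
        exact this w (Finset.mem_univ w)
      have hLHS : ∑ f ∈ Finset.univ.filter P, ∏ w : VH, (G.degree (f w) : ℝ) ^ (α w)
          = ∑ f ∈ Finset.univ.filter P, (G.degree (f o) : ℝ) ^ (0:ℝ) := by
        apply Finset.sum_congr rfl
        intro f _
        rw [Real.rpow_zero]
        apply Finset.prod_eq_one
        intro w _
        rw [hall w, Real.rpow_zero]
      calc ∑ f ∈ Finset.univ.filter P, ∏ w : VH, (G.degree (f w) : ℝ) ^ (α w)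
          = ∑ f ∈ Finset.univ.filter P, (G.degree (f o) : ℝ) ^ (0:ℝ) := hLHS
        _ ≤ TS G Δ π o Finset.univ o (fun x => (G.degree x : ℝ) ^ (0:ℝ)) :=
            hfilter_le o 0
        _ ≤ ∑ v : VG, mu G Δ v * (G.degree v : ℝ) ^ ((h : ℝ) - 1 + 0) :=
            hatom o 0 (le_refl _)
        _ = ∑ v : VG, mu G Δ v * (G.degree v : ℝ) ^ ((h : ℝ) - 1 + σ) := by
            rw [← hσz]
    · -- σ > 0
      have hAMGM : ∀ f : VH → VG, ∏ w : VH, (G.degree (f w) : ℝ) ^ (α w)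
          ≤ ∑ w : VH, (α w / σ) * (G.degree (f w) : ℝ) ^ σ := by
        intro f
        have hgm := Real.geom_mean_le_arith_mean_weighted Finset.univ
          (fun w => α w / σ) (fun w => (G.degree (f w) : ℝ) ^ σ)
          (fun w _ => div_nonneg (hα w) hσ0)
          (by rw [← Finset.sum_div]; exact div_self (ne_of_gt hσpos))
          (fun w _ => Real.rpow_nonneg (Nat.cast_nonneg _) _)
        calc ∏ w : VH, (G.degree (f w) : ℝ) ^ (α w)
            = ∏ w : VH, ((G.degree (f w) : ℝ) ^ σ) ^ (α w / σ) := by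
              apply Finset.prod_congr rfl
              intro w _
              rw [← Real.rpow_mul (Nat.cast_nonneg _)]
              congr 1
              field_simp
          _ ≤ ∑ w : VH, (α w / σ) * (G.degree (f w) : ℝ) ^ σ := hgm
      calc ∑ f ∈ Finset.univ.filter P, ∏ w : VH, (G.degree (f w) : ℝ) ^ (α w)
          ≤ ∑ f ∈ Finset.univ.filter P,
              ∑ w : VH, (α w / σ) * (G.degree (f w) : ℝ) ^ σ :=
            Finset.sum_le_sum fun f _ => hAMGM f
        _ = ∑ w : VH, (α w / σ) *
              ∑ f ∈ Finset.univ.filter P, (G.degree (f w) : ℝ) ^ σ := by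
            rw [Finset.sum_comm]
            apply Finset.sum_congr rfl
            intro w _
            rw [Finset.mul_sum]
        _ ≤ ∑ w : VH, (α w / σ) *
              ∑ v : VG, mu G Δ v * (G.degree v : ℝ) ^ ((h : ℝ) - 1 + σ) := by
            apply Finset.sum_le_sum
            intro w _
            apply mul_le_mul_of_nonneg_left _ (div_nonneg (hα w) hσ0)
            exact le_trans (hfilter_le w σ) (hatom w σ hσ0)
        _ = ∑ v : VG, mu G Δ v * (G.degree v : ℝ) ^ ((h : ℝ) - 1 + σ) := by
            rw [← Finset.sum_mul, ← Finset.sum_div]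
            rw [div_self (ne_of_gt hσpos), one_mul]
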